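/- Fix n ≥ 1, t₀ ∈ ℕ, a real n×n matrix H, an initial matrix A₀ with spectral norm ‖A₀‖ < 1, and a noise sequence s : ℕ → ℝⁿ with ‖s_t‖ ≤ s_max for all t ≥ t₀; set b_max := s_max / (1 − ‖A₀‖). For each α > 0, let (Aᵅ_t), (bᵅ_t) be the exact dynamics with Aᵅ_{t₀} = A₀, bᵅ_{t₀} = 0, bᵅ_{t+1} = Aᵅ_t bᵅ_t − s_t, Aᵅ_{t+1} = Aᵅ_t − α H bᵅ_{t+1} (bᵅ_t)ᵀ H², and let (A'ᵅ_t), (b'_t) be the approximate dynamics with A'ᵅ_{t₀} = A₀, b'_{t₀} = 0, b'_{t+1} = A₀ b'_t − s_t, A'ᵅ_{t+1} = A'ᵅ_t − α H b'_{t+1} (b'_t)ᵀ H². Then the learning-rate-rescaled approximation error vanishes in the iterated limit: for every δ > 0 there exists r₀ > 0 such that for every r ∈ (0, r₀) there exists α₀ > 0 such that for every α ∈ (0, α₀), ‖Aᵅ_{t₀+⌊r/α⌋} − A'ᵅ_{t₀+⌊r/α⌋}‖ ≤ δ r. -/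

import Mathlib

open Matrix

/-- The spectral norm (ℓ²-operator norm) of a real square matrix. -/
noncomputable def specNorm {n : ℕ} (A : Matrix (Fin n) (Fin n) ℝ) : ℝ :=
  ‖Matrix.toEuclideanCLM (𝕜 := ℝ) A‖

/-- The Euclidean norm of a real vector. -/
noncomputable def evNorm {n : ℕ} (v : Fin n → ℝ) : ℝ :=
  Real.sqrt (∑ i, v i ^ 2)

set_option synthInstance.maxHeartbeats 2000000
set_option maxHeartbeats 2000000

section LodoAux
variable {n : ℕ}

lemma evNorm_eq (v : Fin n → ℝ) :
    evNorm v = ‖(WithLp.equiv 2 (Fin n → ℝ)).symm v‖ := by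
  rw [EuclideanSpace.norm_eq]
  simp [evNorm, Real.norm_eq_abs, sq_abs]

lemma evNorm_nonneg (v : Fin n → ℝ) : 0 ≤ evNorm v := Real.sqrt_nonneg _

lemma evNorm_zero : evNorm (0 : Fin n → ℝ) = 0 := by simp [evNorm]

lemma evNorm_add_le (u v : Fin n → ℝ) : evNorm (u + v) ≤ evNorm u + evNorm v := by
  simp only [evNorm_eq]
  have : (WithLp.equiv 2 (Fin n → ℝ)).symm (u + v)
      = (WithLp.equiv 2 (Fin n → ℝ)).symm u + (WithLp.equiv 2 (Fin n → ℝ)).symm v := rfl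
  rw [this]; exact norm_add_le _ _

lemma evNorm_sub_le (u v : Fin n → ℝ) : evNorm (u - v) ≤ evNorm u + evNorm v := by
  simp only [evNorm_eq]
  have : (WithLp.equiv 2 (Fin n → ℝ)).symm (u - v)
      = (WithLp.equiv 2 (Fin n → ℝ)).symm u - (WithLp.equiv 2 (Fin n → ℝ)).symm v := rfl
  rw [this]; exact norm_sub_le _ _

lemma specNorm_nonneg (X : Matrix (Fin n) (Fin n) ℝ) : 0 ≤ specNorm X := norm_nonneg _

lemma specNorm_zero : specNorm (0 : Matrix (Fin n) (Fin n) ℝ) = 0 := by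
  rw [specNorm, map_zero, norm_zero]

lemma specNorm_add_le (X Y : Matrix (Fin n) (Fin n) ℝ) :
    specNorm (X + Y) ≤ specNorm X + specNorm Y := by
  simp only [specNorm, map_add]; exact norm_add_le _ _

lemma specNorm_sub_le (X Y : Matrix (Fin n) (Fin n) ℝ) :
    specNorm (X - Y) ≤ specNorm X + specNorm Y := by
  simp only [specNorm, map_sub]; exact norm_sub_le _ _

lemma specNorm_smul (c : ℝ) (X : Matrix (Fin n) (Fin n) ℝ) :
    specNorm (c • X) = |c| * specNorm X := by
  simp only [specNorm, _root_.map_smul]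
  rw [norm_smul c (toEuclideanCLM (𝕜 := ℝ) X), Real.norm_eq_abs]

lemma specNorm_mul_le (X Y : Matrix (Fin n) (Fin n) ℝ) :
    specNorm (X * Y) ≤ specNorm X * specNorm Y := by
  simp only [specNorm, _root_.map_mul]; exact norm_mul_le _ _

lemma toEuclideanCLM_piLp_equiv_symm (A : Matrix (Fin n) (Fin n) ℝ) (v : Fin n → ℝ) :
    toEuclideanCLM (𝕜 := ℝ) A ((WithLp.equiv 2 (Fin n → ℝ)).symm v)
      = (WithLp.equiv 2 (Fin n → ℝ)).symm (Matrix.toLin' A v) := rfl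

lemma evNorm_mulVec_le (A : Matrix (Fin n) (Fin n) ℝ) (v : Fin n → ℝ) :
    evNorm (A *ᵥ v) ≤ specNorm A * evNorm v := by
  rw [evNorm_eq, evNorm_eq, ← Matrix.toLin'_apply, ← toEuclideanCLM_piLp_equiv_symm]
  exact ContinuousLinearMap.le_opNorm _ _

lemma abs_dotProduct_le (u w : Fin n → ℝ) : |u ⬝ᵥ w| ≤ evNorm u * evNorm w := by
  rw [evNorm_eq, evNorm_eq]
  have := abs_real_inner_le_norm ((WithLp.equiv 2 (Fin n → ℝ)).symm u)
    ((WithLp.equiv 2 (Fin n → ℝ)).symm w)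
  rwa [show inner ℝ ((WithLp.equiv 2 (Fin n → ℝ)).symm u) ((WithLp.equiv 2 (Fin n → ℝ)).symm w)
    = u ⬝ᵥ w from by rw [dotProduct_comm]; rfl] at this

lemma vecMulVec_mulVec' (u v w : Fin n → ℝ) :
    vecMulVec u v *ᵥ w = (v ⬝ᵥ w) • u := by
  ext i
  simp only [Matrix.mulVec, Matrix.vecMulVec_apply, dotProduct, Pi.smul_apply,
    smul_eq_mul, Finset.sum_mul, Finset.mul_sum]
  exact Finset.sum_congr rfl fun j _ => by ring

lemma specNorm_vecMulVec_le (u v : Fin n → ℝ) :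
    specNorm (vecMulVec u v) ≤ evNorm u * evNorm v := by
  unfold specNorm
  apply ContinuousLinearMap.opNorm_le_bound _ (mul_nonneg (evNorm_nonneg u) (evNorm_nonneg v))
  intro x
  conv_lhs => rw [← (WithLp.equiv 2 (Fin n → ℝ)).symm_apply_apply x]
  rw [toEuclideanCLM_piLp_equiv_symm, Matrix.toLin'_apply, vecMulVec_mulVec']
  set w := (WithLp.equiv 2 (Fin n → ℝ)) x with hw
  have hsm : (WithLp.equiv 2 (Fin n → ℝ)).symm ((v ⬝ᵥ w) • u)
      = (v ⬝ᵥ w) • (WithLp.equiv 2 (Fin n → ℝ)).symm u := rfl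
  rw [hsm, norm_smul, Real.norm_eq_abs, ← evNorm_eq]
  have h1 := abs_dotProduct_le v w
  have h2 : evNorm w = ‖x‖ := by rw [evNorm_eq]; rfl
  rw [h2] at h1
  nlinarith [mul_le_mul_of_nonneg_right h1 (evNorm_nonneg u), evNorm_nonneg u]

end LodoAux
section MainAux
variable {n : ℕ}

lemma specNorm_sq_le (H : Matrix (Fin n) (Fin n) ℝ) : specNorm (H ^ 2) ≤ specNorm H ^ 2 := by
  rw [sq, sq]; exact specNorm_mul_le _ _

lemma specNorm_HVH_le (H : Matrix (Fin n) (Fin n) ℝ) (u v : Fin n → ℝ) (cu cv : ℝ)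
    (hu : evNorm u ≤ cu) (hv : evNorm v ≤ cv) :
    specNorm (H * Matrix.vecMulVec u v * H ^ 2) ≤ specNorm H ^ 3 * (cu * cv) := by
  have h0 := specNorm_nonneg H
  have hu0 := evNorm_nonneg u
  have hv0 := evNorm_nonneg v
  have hVle : specNorm (Matrix.vecMulVec u v) ≤ cu * cv :=
    le_trans (specNorm_vecMulVec_le u v)
      (mul_le_mul hu hv hv0 (le_trans hu0 hu))
  calc specNorm (H * Matrix.vecMulVec u v * H ^ 2)
      ≤ specNorm (H * Matrix.vecMulVec u v) * specNorm (H ^ 2) := specNorm_mul_le _ _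
    _ ≤ (specNorm H * (cu * cv)) * specNorm H ^ 2 := by
        have h1 : specNorm (H * Matrix.vecMulVec u v) ≤ specNorm H * (cu * cv) :=
          le_trans (specNorm_mul_le _ _) (mul_le_mul_of_nonneg_left hVle h0)
        exact mul_le_mul h1 (specNorm_sq_le H) (specNorm_nonneg _)
          (mul_nonneg h0 (mul_nonneg (le_trans hu0 hu) (le_trans hv0 hv)))
    _ = specNorm H ^ 3 * (cu * cv) := by ring

lemma vecMulVec_sub_sub (a b c d : Fin n → ℝ) :
    Matrix.vecMulVec a c - Matrix.vecMulVec b d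
      = Matrix.vecMulVec (a - b) c + Matrix.vecMulVec b (c - d) := by
  ext i j
  simp [Matrix.vecMulVec_apply]
  ring

end MainAux

/-- The learning-rate-rescaled approximation error of the frozen-`A`
dynamics vanishes in the iterated limit:
`lim_{r→0} lim_{α→0} (1/r) ‖A^α_{t₀+⌊r/α⌋} − A'^α_{t₀+⌊r/α⌋}‖ = 0`. -/
theorem lodo_approximation_error_vanishes (n : ℕ) (hn : 1 ≤ n) (t₀ : ℕ)
    (H : Matrix (Fin n) (Fin n) ℝ)
    (A₀ : Matrix (Fin n) (Fin n) ℝ) (hA₀ : specNorm A₀ < 1)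
    (smax : ℝ) (s : ℕ → (Fin n → ℝ)) (hs : ∀ t, t₀ ≤ t → evNorm (s t) ≤ smax)
    (A A' : ℝ → ℕ → Matrix (Fin n) (Fin n) ℝ)
    (b : ℝ → ℕ → (Fin n → ℝ)) (b' : ℕ → (Fin n → ℝ))
    (hA0 : ∀ α : ℝ, 0 < α → A α t₀ = A₀)
    (hb0 : ∀ α : ℝ, 0 < α → b α t₀ = 0)
    (hbrec : ∀ α : ℝ, 0 < α → ∀ t, t₀ ≤ t → b α (t + 1) = A α t *ᵥ b α t - s t)
    (hArec : ∀ α : ℝ, 0 < α → ∀ t, t₀ ≤ t →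
      A α (t + 1) = A α t - α • (H * vecMulVec (b α (t + 1)) (b α t) * H ^ 2))
    (hA'0 : ∀ α : ℝ, 0 < α → A' α t₀ = A₀)
    (hb'0 : b' t₀ = 0)
    (hb'rec : ∀ t, t₀ ≤ t → b' (t + 1) = A₀ *ᵥ b' t - s t)
    (hA'rec : ∀ α : ℝ, 0 < α → ∀ t, t₀ ≤ t →
      A' α (t + 1) = A' α t - α • (H * vecMulVec (b' (t + 1)) (b' t) * H ^ 2)) :
    ∀ δ : ℝ, 0 < δ → ∃ r₀ : ℝ, 0 < r₀ ∧ ∀ r : ℝ, 0 < r → r < r₀ →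
      ∃ α₀ : ℝ, 0 < α₀ ∧ ∀ α : ℝ, 0 < α → α < α₀ →
        specNorm (A α (t₀ + ⌊r / α⌋₊) - A' α (t₀ + ⌊r / α⌋₊)) ≤ δ * r := by
  intro δ hδ
  have hρ0 : 0 ≤ specNorm A₀ := specNorm_nonneg _
  set ρ := specNorm A₀ with hρdef
  set θ : ℝ := (1 + ρ) / 2 with hθdef
  have hθ0 : 0 ≤ θ := by rw [hθdef]; linarith
  have hθρ : ρ ≤ θ := by rw [hθdef]; linarith
  have hε : 0 < 1 - θ := by rw [hθdef]; linarith
  have hsmax : 0 ≤ smax := le_trans (evNorm_nonneg _) (hs t₀ le_rfl)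
  set B : ℝ := smax / (1 - θ) with hBdef
  have hB0 : 0 ≤ B := div_nonneg hsmax hε.le
  have hBfix : θ * B + smax = B := by rw [hBdef]; field_simp; ring
  have hh0 : 0 ≤ specNorm H := specNorm_nonneg _
  set C : ℝ := specNorm H ^ 3 * B ^ 2 with hCdef
  have hC0 : 0 ≤ C := by rw [hCdef]; positivity
  set K : ℝ := 2 * C ^ 2 / (1 - θ) with hKdef
  have hK0 : 0 ≤ K := by rw [hKdef]; positivity
  refine ⟨min ((1 - θ) / (C + 1)) (δ / (K + 1)),
    lt_min (by positivity) (by positivity), ?_⟩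
  intro r hr hrlt
  have hrC : r * C ≤ 1 - θ := by
    have h1 : r < (1 - θ) / (C + 1) := lt_of_lt_of_le hrlt (min_le_left _ _)
    rw [lt_div_iff₀ (by linarith : (0:ℝ) < C + 1)] at h1
    nlinarith
  have hrK : K * r ≤ δ := by
    have h1 : r < δ / (K + 1) := lt_of_lt_of_le hrlt (min_le_right _ _)
    rw [lt_div_iff₀ (by linarith : (0:ℝ) < K + 1)] at h1
    nlinarith
  refine ⟨1, one_pos, ?_⟩
  intro α hα hα1
  set k := ⌊r / α⌋₊ with hkdef
  have hαk : α * (k:ℝ) ≤ r := by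
    have h1 : (k:ℝ) ≤ r / α := Nat.floor_le (by positivity)
    rw [le_div_iff₀ hα] at h1
    linarith [h1, mul_comm (k:ℝ) α]
  set E : ℝ := r * C * B / (1 - θ) with hEdef
  have hE0 : 0 ≤ E := by rw [hEdef]; positivity
  have hEfix : θ * E + r * C * B = E := by rw [hEdef]; field_simp; ring
  -- bound on the frozen dynamics b'
  have hb'B : ∀ j : ℕ, evNorm (b' (t₀ + j)) ≤ B := by
    intro j
    induction j with
    | zero => simpa [hb'0, evNorm_zero] using hB0
    | succ j ih =>
      have ht : t₀ ≤ t₀ + j := Nat.le_add_right _ _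
      rw [show t₀ + (j + 1) = (t₀ + j) + 1 from rfl, hb'rec _ ht]
      have h1 := evNorm_sub_le (A₀ *ᵥ b' (t₀ + j)) (s (t₀ + j))
      have h2 := evNorm_mulVec_le A₀ (b' (t₀ + j))
      have h3 := hs (t₀ + j) ht
      have h4 : ρ * evNorm (b' (t₀ + j)) ≤ θ * B :=
        mul_le_mul hθρ ih (evNorm_nonneg _) hθ0
      linarith
  -- combined bound on exact dynamics: b bounded and A close to A₀
  have claim1 : ∀ j : ℕ, j ≤ k →
      evNorm (b α (t₀ + j)) ≤ B ∧ specNorm (A α (t₀ + j) - A₀) ≤ α * j * C := by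
    intro j
    induction j with
    | zero =>
      intro _
      refine ⟨by simpa [hb0 α hα, evNorm_zero] using hB0, ?_⟩
      simp [hA0 α hα, sub_self, specNorm_zero]
    | succ j ih =>
      intro hj
      obtain ⟨hbj, hAj⟩ := ih (Nat.le_of_succ_le hj)
      have ht : t₀ ≤ t₀ + j := Nat.le_add_right _ _
      have hαjC : α * j * C ≤ r * C := by
        have hj' : (j:ℝ) ≤ (k:ℝ) := Nat.cast_le.mpr (Nat.le_of_succ_le hj)
        have h5 : α * (j:ℝ) ≤ r := le_trans (by nlinarith) hαk
        nlinarith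
      have hdrift : specNorm (A α (t₀ + j) - A₀) ≤ 1 - θ :=
        le_trans hAj (le_trans hαjC hrC)
      have hAθ : specNorm (A α (t₀ + j)) ≤ θ := by
        calc specNorm (A α (t₀ + j)) = specNorm ((A α (t₀ + j) - A₀) + A₀) := by
              rw [sub_add_cancel]
          _ ≤ specNorm (A α (t₀ + j) - A₀) + ρ := specNorm_add_le _ _
          _ ≤ θ := by rw [hθdef]; rw [hθdef] at hdrift; linarith
      have hbj1 : evNorm (b α (t₀ + (j + 1))) ≤ B := by
        rw [show t₀ + (j + 1) = (t₀ + j) + 1 from rfl, hbrec α hα _ ht]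
        have h1 := evNorm_sub_le (A α (t₀ + j) *ᵥ b α (t₀ + j)) (s (t₀ + j))
        have h2 := evNorm_mulVec_le (A α (t₀ + j)) (b α (t₀ + j))
        have h3 := hs (t₀ + j) ht
        have h4 : specNorm (A α (t₀ + j)) * evNorm (b α (t₀ + j)) ≤ θ * B :=
          mul_le_mul hAθ hbj (evNorm_nonneg _) hθ0
        linarith
      refine ⟨hbj1, ?_⟩
      have hW : specNorm (H * vecMulVec (b α ((t₀ + j) + 1)) (b α (t₀ + j)) * H ^ 2)
          ≤ C := by
        have := specNorm_HVH_le H (b α ((t₀ + j) + 1)) (b α (t₀ + j)) B B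
          (by exact_mod_cast hbj1) hbj
        rw [hCdef]; nlinarith
      rw [show t₀ + (j + 1) = (t₀ + j) + 1 from rfl, hArec α hα _ ht]
      have h1 : specNorm ((A α (t₀ + j) - α • (H * vecMulVec (b α ((t₀ + j) + 1)) (b α (t₀ + j)) * H ^ 2)) - A₀)
          ≤ specNorm (A α (t₀ + j) - A₀)
            + α * specNorm (H * vecMulVec (b α ((t₀ + j) + 1)) (b α (t₀ + j)) * H ^ 2) := by
        have heq : (A α (t₀ + j) - α • (H * vecMulVec (b α ((t₀ + j) + 1)) (b α (t₀ + j)) * H ^ 2)) - A₀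
            = (A α (t₀ + j) - A₀) - α • (H * vecMulVec (b α ((t₀ + j) + 1)) (b α (t₀ + j)) * H ^ 2) := by
          abel
        rw [heq]
        refine le_trans (specNorm_sub_le _ _) ?_
        rw [specNorm_smul, abs_of_pos hα]
      push_cast
      have h2 : α * specNorm (H * vecMulVec (b α ((t₀ + j) + 1)) (b α (t₀ + j)) * H ^ 2) ≤ α * C :=
        mul_le_mul_of_nonneg_left hW hα.le
      have hexp : α * ((j:ℝ) + 1) * C = α * (j:ℝ) * C + α * C := by ring
      linarith [h1, h2, hAj]
  -- bound on the difference of the b dynamics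
  have claim3 : ∀ j : ℕ, j ≤ k → evNorm (b α (t₀ + j) - b' (t₀ + j)) ≤ E := by
    intro j
    induction j with
    | zero =>
      intro _
      simpa [hb0 α hα, hb'0, sub_self, evNorm_zero] using hE0
    | succ j ih =>
      intro hj
      have hej := ih (Nat.le_of_succ_le hj)
      obtain ⟨hbj, hAj⟩ := claim1 j (Nat.le_of_succ_le hj)
      have ht : t₀ ≤ t₀ + j := Nat.le_add_right _ _
      have hαjC : α * j * C ≤ r * C := by
        have hj' : (j:ℝ) ≤ (k:ℝ) := Nat.cast_le.mpr (Nat.le_of_succ_le hj)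
        have h5 : α * (j:ℝ) ≤ r := le_trans (by nlinarith) hαk
        nlinarith
      have hdrift : specNorm (A α (t₀ + j) - A₀) ≤ r * C := le_trans hAj hαjC
      have hAθ : specNorm (A α (t₀ + j)) ≤ θ := by
        have hdrift' : specNorm (A α (t₀ + j) - A₀) ≤ 1 - θ := le_trans hdrift hrC
        calc specNorm (A α (t₀ + j)) = specNorm ((A α (t₀ + j) - A₀) + A₀) := by
              rw [sub_add_cancel]
          _ ≤ specNorm (A α (t₀ + j) - A₀) + ρ := specNorm_add_le _ _
          _ ≤ θ := by rw [hθdef]; rw [hθdef] at hdrift'; linarith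
      have hid : b α (t₀ + (j + 1)) - b' (t₀ + (j + 1))
          = A α (t₀ + j) *ᵥ (b α (t₀ + j) - b' (t₀ + j))
            + (A α (t₀ + j) - A₀) *ᵥ b' (t₀ + j) := by
        rw [show t₀ + (j + 1) = (t₀ + j) + 1 from rfl, hbrec α hα _ ht, hb'rec _ ht,
          Matrix.mulVec_sub, Matrix.sub_mulVec]
        abel
      rw [hid]
      have h1 := evNorm_add_le (A α (t₀ + j) *ᵥ (b α (t₀ + j) - b' (t₀ + j)))
        ((A α (t₀ + j) - A₀) *ᵥ b' (t₀ + j))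
      have h2 := evNorm_mulVec_le (A α (t₀ + j)) (b α (t₀ + j) - b' (t₀ + j))
      have h3 := evNorm_mulVec_le (A α (t₀ + j) - A₀) (b' (t₀ + j))
      have h4 : specNorm (A α (t₀ + j)) * evNorm (b α (t₀ + j) - b' (t₀ + j)) ≤ θ * E :=
        mul_le_mul hAθ hej (evNorm_nonneg _) hθ0
      have h5 : specNorm (A α (t₀ + j) - A₀) * evNorm (b' (t₀ + j)) ≤ (r * C) * B :=
        mul_le_mul hdrift (hb'B j) (evNorm_nonneg _) (by positivity)
      linarith [hEfix]
  -- bound on the difference of the A dynamics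
  have claim4 : ∀ j : ℕ, j ≤ k →
      specNorm (A α (t₀ + j) - A' α (t₀ + j)) ≤ α * j * (2 * specNorm H ^ 3 * B * E) := by
    intro j
    induction j with
    | zero =>
      intro _
      simp [hA0 α hα, hA'0 α hα, sub_self, specNorm_zero]
    | succ j ih =>
      intro hj
      have hdj := ih (Nat.le_of_succ_le hj)
      obtain ⟨hbj, hAj⟩ := claim1 j (Nat.le_of_succ_le hj)
      obtain ⟨hbj1, _⟩ := claim1 (j + 1) hj
      have hej := claim3 j (Nat.le_of_succ_le hj)
      have hej1 := claim3 (j + 1) hj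
      have hb'j := hb'B j
      have hb'j1 := hb'B (j + 1)
      have ht : t₀ ≤ t₀ + j := Nat.le_add_right _ _
      have hid : A α (t₀ + (j + 1)) - A' α (t₀ + (j + 1))
          = (A α (t₀ + j) - A' α (t₀ + j))
            - α • (H * (vecMulVec (b α (t₀ + (j + 1))) (b α (t₀ + j))
                - vecMulVec (b' (t₀ + (j + 1))) (b' (t₀ + j))) * H ^ 2) := by
        rw [show t₀ + (j + 1) = (t₀ + j) + 1 from rfl, hArec α hα _ ht, hA'rec α hα _ ht,
          mul_sub, sub_mul, smul_sub]
        abel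
      rw [hid]
      have hVsplit : vecMulVec (b α (t₀ + (j + 1))) (b α (t₀ + j))
          - vecMulVec (b' (t₀ + (j + 1))) (b' (t₀ + j))
          = vecMulVec (b α (t₀ + (j + 1)) - b' (t₀ + (j + 1))) (b α (t₀ + j))
            + vecMulVec (b' (t₀ + (j + 1))) (b α (t₀ + j) - b' (t₀ + j)) :=
        vecMulVec_sub_sub _ _ _ _
      have hWbound : specNorm (H * (vecMulVec (b α (t₀ + (j + 1))) (b α (t₀ + j))
          - vecMulVec (b' (t₀ + (j + 1))) (b' (t₀ + j))) * H ^ 2)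
          ≤ 2 * specNorm H ^ 3 * B * E := by
        rw [hVsplit, mul_add, add_mul]
        refine le_trans (specNorm_add_le _ _) ?_
        have hw1 := specNorm_HVH_le H _ _ E B hej1 hbj
        have hw2 := specNorm_HVH_le H _ _ B E hb'j1 hej
        have hexp : specNorm H ^ 3 * (E * B) + specNorm H ^ 3 * (B * E)
            = 2 * specNorm H ^ 3 * B * E := by ring
        linarith [hw1, hw2]
      have htri : specNorm ((A α (t₀ + j) - A' α (t₀ + j))
          - α • (H * (vecMulVec (b α (t₀ + (j + 1))) (b α (t₀ + j))
              - vecMulVec (b' (t₀ + (j + 1))) (b' (t₀ + j))) * H ^ 2))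
          ≤ specNorm (A α (t₀ + j) - A' α (t₀ + j))
            + α * specNorm (H * (vecMulVec (b α (t₀ + (j + 1))) (b α (t₀ + j))
              - vecMulVec (b' (t₀ + (j + 1))) (b' (t₀ + j))) * H ^ 2) := by
        refine le_trans (specNorm_sub_le _ _) ?_
        rw [specNorm_smul, abs_of_pos hα]
      push_cast
      have h2 : α * specNorm (H * (vecMulVec (b α (t₀ + (j + 1))) (b α (t₀ + j))
          - vecMulVec (b' (t₀ + (j + 1))) (b' (t₀ + j))) * H ^ 2)
          ≤ α * (2 * specNorm H ^ 3 * B * E) :=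
        mul_le_mul_of_nonneg_left hWbound hα.le
      have hexp : α * ((j:ℝ) + 1) * (2 * specNorm H ^ 3 * B * E)
          = α * (j:ℝ) * (2 * specNorm H ^ 3 * B * E)
            + α * (2 * specNorm H ^ 3 * B * E) := by ring
      linarith [htri, h2, hdj]
  -- conclude
  have hfin := claim4 k le_rfl
  have hS0 : 0 ≤ 2 * specNorm H ^ 3 * B * E := by positivity
  have hstep : α * (k:ℝ) * (2 * specNorm H ^ 3 * B * E) ≤ r * (2 * specNorm H ^ 3 * B * E) :=
    mul_le_mul_of_nonneg_right hαk hS0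
  have hKr : r * (2 * specNorm H ^ 3 * B * E) = K * r ^ 2 := by
    rw [hEdef, hKdef, hCdef]
    field_simp
  have : K * r ^ 2 ≤ δ * r := by nlinarith [hrK, hr]
  calc specNorm (A α (t₀ + k) - A' α (t₀ + k)) ≤ α * (k:ℝ) * (2 * specNorm H ^ 3 * B * E) := hfin
    _ ≤ r * (2 * specNorm H ^ 3 * B * E) := hstep
    _ = K * r ^ 2 := hKr
    _ ≤ δ * r := this
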